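/- arXiv:1507.01146 — 6 statements merged into one kernel-verified Lean document; each statement's English description precedes it below -/
import Mathlib

section
/- The quadratic equation in σ obtained from requiring a triple root of p(s) = s² + as + (k_p s + k_i) b e^{-hs} at s = -σ has solutions σ = (4 + ah ± √(8 + a²h²))/(2h); in particular σ* = (4 + ah − √(8 + a²h²))/(2h) is a real positive number for all a ≥ 0, h > 0. -/
/-- The quadratic (from the triple-root conditions) `h²σ² − (4+ah)hσ + 2(1+ah) = 0`
has solutions `σ = (4+ah ± √(8+a²h²))/(2h)`, and the minus-branch
`σ* = (4+ah − √(8+a²h²))/(2h)` is positive. -/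
theorem stmt_0 (a h : ℝ) (ha : 0 ≤ a) (hh : 0 < h) :
    (∀ σ ∈ ({(4 + a*h + Real.sqrt (8 + a^2*h^2)) / (2*h),
              (4 + a*h - Real.sqrt (8 + a^2*h^2)) / (2*h)} : Set ℝ),
      h^2*σ^2 - (4 + a*h)*h*σ + 2*(1 + a*h) = 0) ∧
    0 < (4 + a*h - Real.sqrt (8 + a^2*h^2)) / (2*h) := by
  have hD : (0:ℝ) ≤ 8 + a^2*h^2 := by positivity
  have hsq : Real.sqrt (8 + a^2*h^2) ^ 2 = 8 + a^2*h^2 := Real.sq_sqrt hD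
  have hne : (2*h) ≠ 0 := by positivity
  constructor
  · intro σ hσ
    rcases hσ with h1 | h1 <;>
    · subst h1
      field_simp
      linear_combination Real.sq_sqrt (by positivity : (0:ℝ) ≤ 8 + h^2*a^2)
  · have hlt : Real.sqrt (8 + a^2*h^2) < 4 + a*h := by
      have h4 : (0:ℝ) ≤ 4 + a*h := by positivity
      nlinarith [Real.sq_sqrt hD, Real.sqrt_nonneg (8 + a^2*h^2)]
    have : 0 < 4 + a*h - Real.sqrt (8 + a^2*h^2) := by linarith
    positivity
end

section
/- If a ≥ 0, b > 0, h > 0 and σ ≥ a/2, then k_p = (σh(a−σ) − (a−2σ))/(b e^{hσ}) ≥ 0 and k_i = σ²(h(a−σ)+1)/(b e^{hσ}) ≥ 0, provided additionally σ ≤ σ* = (4 + ah − √(8+a²h²))/(2h). -/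
/-- Nonnegativity of the minimal PI gains for `a/2 ≤ σ ≤ σ*`. -/
theorem stmt_3 (a b h σ : ℝ) (ha : 0 ≤ a) (hb : 0 < b) (hh : 0 < h)
    (hσ1 : a / 2 ≤ σ)
    (hσ2 : σ ≤ (4 + a*h - Real.sqrt (8 + a^2*h^2)) / (2*h)) :
    0 ≤ (σ*h*(a - σ) - (a - 2*σ)) / (b*Real.exp (h*σ)) ∧
    0 ≤ σ^2*(h*(a - σ) + 1) / (b*Real.exp (h*σ)) := by
  have hden : 0 < b * Real.exp (h*σ) := by positivity
  set S := Real.sqrt (8 + a^2*h^2) with hS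
  have hS0 : 0 ≤ S := Real.sqrt_nonneg _
  have hS2 : (2:ℝ) ≤ S := by
    have : Real.sqrt 4 ≤ S := Real.sqrt_le_sqrt (by nlinarith)
    rwa [show (4:ℝ) = 2^2 by norm_num, Real.sqrt_sq (by norm_num : (0:ℝ) ≤ 2)] at this
  have ht : 2*h*σ ≤ 4 + a*h - S := by
    have h2h : (0:ℝ) < 2*h := by linarith
    have := (le_div_iff₀ h2h).mp hσ2
    linarith
  set T := Real.sqrt (a^2*h^2 + 4) with hT
  have hT0 : 0 ≤ T := Real.sqrt_nonneg _
  have hTsq : T^2 = a^2*h^2 + 4 := Real.sq_sqrt (by positivity)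
  have hah : (0:ℝ) ≤ a*h := mul_nonneg ha hh.le
  have hT2 : (2:ℝ) ≤ T := by
    have : Real.sqrt 4 ≤ T := Real.sqrt_le_sqrt (by nlinarith)
    rwa [show (4:ℝ) = 2^2 by norm_num, Real.sqrt_sq (by norm_num : (0:ℝ) ≤ 2)] at this
  have hta : a*h ≤ 2*h*σ := by nlinarith
  have ht2 : 2*h*σ ≤ a*h + 2 + T := by linarith
  constructor
  · apply div_nonneg _ hden.le
    nlinarith [mul_nonneg (by linarith : (0:ℝ) ≤ T - (2*h*σ - a*h - 2))
      (by linarith : (0:ℝ) ≤ T + (2*h*σ - a*h - 2)), hh.le, sq_nonneg h]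
  · apply div_nonneg _ hden.le
    have h1 : h*σ ≤ a*h + 1 := by linarith
    have : 0 ≤ h*(a - σ) + 1 := by nlinarith
    positivity
end

section
/- The equation 2(1 + e^η) + η(1 − e^η) = 0 has a unique positive real solution η_sup, and η_sup ∈ (2.39, 2.41). -/
open Real Set

noncomputable def hAux (x : ℝ) : ℝ := Real.exp x * (x - 2) - (x + 2)

lemma hAux_deriv (x : ℝ) : HasDerivAt hAux (Real.exp x * (x - 1) - 1) x := by
  have h1 : HasDerivAt (fun x : ℝ => Real.exp x * (x - 2))
      (Real.exp x * (x - 2) + Real.exp x * 1) x :=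
    (Real.hasDerivAt_exp x).mul ((hasDerivAt_id x).sub_const 2)
  have h2 : HasDerivAt (fun x : ℝ => x + 2) 1 x := (hasDerivAt_id x).add_const 2
  have h3 := h1.sub h2
  rw [show Real.exp x * (x - 1) - 1 = Real.exp x * (x - 2) + Real.exp x * 1 - 1 by ring]
  exact h3

lemma hAux_cont : Continuous hAux := by
  have : ∀ x, HasDerivAt hAux (Real.exp x * (x - 1) - 1) x := hAux_deriv
  exact continuous_iff_continuousAt.mpr fun x => (this x).continuousAt

lemma hAux_mono : StrictMonoOn hAux (Ici 2) := by
  apply strictMonoOn_of_deriv_pos (convex_Ici 2) hAux_cont.continuousOn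
  intro x hx
  rw [interior_Ici] at hx
  rw [(hAux_deriv x).deriv]
  have hx' : (2 : ℝ) < x := hx
  have h1 : x + 1 < Real.exp x := Real.add_one_lt_exp (ne_of_gt (by linarith : (0:ℝ) < x))
  nlinarith [hx', h1]

lemma exp239_lt : Real.exp 2.39 < 11.25 := by
  have h100 : Real.exp 2.39 ^ 100 = Real.exp 1 ^ 239 := by
    rw [← Real.exp_nat_mul, ← Real.exp_nat_mul]; norm_num
  have he : Real.exp 1 ^ 239 < 2.7182818286 ^ 239 :=
    pow_lt_pow_left₀ Real.exp_one_lt_d9 (le_of_lt (Real.exp_pos 1)) (by norm_num)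
  have hn : (2.7182818286 : ℝ) ^ 239 < 11.25 ^ 100 := by norm_num
  have h : Real.exp 2.39 ^ 100 < 11.25 ^ 100 := by rw [h100]; linarith
  exact lt_of_pow_lt_pow_left₀ 100 (by norm_num) h

lemma exp241_gt : (10.76 : ℝ) < Real.exp 2.41 := by
  have h100 : Real.exp 2.41 ^ 100 = Real.exp 1 ^ 241 := by
    rw [← Real.exp_nat_mul, ← Real.exp_nat_mul]; norm_num
  have he : (2.7182818283 : ℝ) ^ 241 < Real.exp 1 ^ 241 :=
    pow_lt_pow_left₀ Real.exp_one_gt_d9 (by norm_num) (by norm_num)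
  have hn : (10.76 : ℝ) ^ 100 < 2.7182818283 ^ 241 := by norm_num
  have h : (10.76 : ℝ) ^ 100 < Real.exp 2.41 ^ 100 := by rw [h100]; linarith
  exact lt_of_pow_lt_pow_left₀ 100 (le_of_lt (Real.exp_pos _)) h

lemma hAux_239_neg : hAux 2.39 < 0 := by
  have := exp239_lt
  unfold hAux
  nlinarith [Real.exp_pos (2.39 : ℝ)]

lemma hAux_241_pos : 0 < hAux 2.41 := by
  have := exp241_gt
  unfold hAux
  nlinarith

lemma eq_iff_hAux (η : ℝ) :
    2*(1 + Real.exp η) + η*(1 - Real.exp η) = 0 ↔ hAux η = 0 := by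
  have : hAux η = -(2*(1 + Real.exp η) + η*(1 - Real.exp η)) := by unfold hAux; ring
  rw [this]
  constructor <;> intro h <;> linarith

lemma sol_gt_two {η : ℝ} (hpos : 0 < η) (h0 : hAux η = 0) : 2 < η := by
  by_contra hle
  push_neg at hle
  have hexp := Real.exp_pos η
  unfold hAux at h0
  nlinarith

/-- The equation `2(1+e^η) + η(1−e^η) = 0` has a unique positive solution
`η_sup`, and `η_sup ∈ (2.39, 2.41)`. -/
theorem stmt_8 :
    (∃! η : ℝ, 0 < η ∧ 2*(1 + Real.exp η) + η*(1 - Real.exp η) = 0) ∧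
    ∀ η : ℝ, 0 < η → 2*(1 + Real.exp η) + η*(1 - Real.exp η) = 0 →
      2.39 < η ∧ η < 2.41 := by
  -- a root of hAux in [2.39, 2.41]
  obtain ⟨η₀, hmem, hval⟩ : ∃ x ∈ Icc (2.39 : ℝ) 2.41, hAux x = 0 := by
    have hsub := intermediate_value_Icc (by norm_num : (2.39 : ℝ) ≤ 2.41)
      hAux_cont.continuousOn
    have h0 : (0 : ℝ) ∈ Icc (hAux 2.39) (hAux 2.41) :=
      ⟨le_of_lt hAux_239_neg, le_of_lt hAux_241_pos⟩
    obtain ⟨x, hx, hfx⟩ := hsub h0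
    exact ⟨x, hx, hfx⟩
  obtain ⟨h39, h41⟩ := hmem
  have hη₀pos : (0 : ℝ) < η₀ := by linarith
  -- bounds for any positive solution
  have hbounds : ∀ η : ℝ, 0 < η → hAux η = 0 → 2.39 < η ∧ η < 2.41 := by
    intro η hpos h0
    have h2 : 2 < η := sol_gt_two hpos h0
    have hmemη : η ∈ Ici (2 : ℝ) := le_of_lt h2
    have hmem39 : (2.39 : ℝ) ∈ Ici (2 : ℝ) := by norm_num
    have hmem41 : (2.41 : ℝ) ∈ Ici (2 : ℝ) := by norm_num
    constructor
    · exact (hAux_mono.lt_iff_lt hmem39 hmemη).mp (by rw [h0]; exact hAux_239_neg)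
    · exact (hAux_mono.lt_iff_lt hmemη hmem41).mp (by rw [h0]; exact hAux_241_pos)
  constructor
  · refine ⟨η₀, ⟨hη₀pos, (eq_iff_hAux η₀).mpr hval⟩, ?_⟩
    intro η ⟨hpos, heq⟩
    have h0 : hAux η = 0 := (eq_iff_hAux η).mp heq
    have h2 : 2 < η := sol_gt_two hpos h0
    have h2' : 2 < η₀ := sol_gt_two hη₀pos hval
    exact hAux_mono.injOn (le_of_lt h2) (le_of_lt h2') (by rw [h0, hval])
  · intro η hpos heq
    exact hbounds η hpos ((eq_iff_hAux η).mp heq)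
end

section
/- Let η_sup be the unique positive root of 2(1+e^η) + η(1−e^η) = 0 and define ζ_min = (1+e^{η_sup})²/(2η_sup e^{η_sup} − (1+e^{η_sup})(1−e^{η_sup})). Then ζ_min > 0 and ζ_min < 1. -/
/-- With `η_sup` the unique positive root of `2(1+e^η) + η(1−e^η) = 0`,
`ζ_min = (1+e^{η_sup})²/(2η_sup e^{η_sup} − (1+e^{η_sup})(1−e^{η_sup}))`
satisfies `0 < ζ_min < 1`. -/
theorem stmt_10 (ηs : ℝ) (hη : 0 < ηs)
    (hroot : 2*(1 + Real.exp ηs) + ηs*(1 - Real.exp ηs) = 0) :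
    0 < (1 + Real.exp ηs)^2 /
        (2*ηs*Real.exp ηs - (1 + Real.exp ηs)*(1 - Real.exp ηs)) ∧
    (1 + Real.exp ηs)^2 /
        (2*ηs*Real.exp ηs - (1 + Real.exp ηs)*(1 - Real.exp ηs)) < 1 := by
  set E := Real.exp ηs with hEdef
  have hE : 1 < E := by
    rw [hEdef, show (1:ℝ) = Real.exp 0 from Real.exp_zero.symm]
    exact Real.exp_lt_exp.2 hη
  set D := 2*ηs*E - (1 + E)*(1 - E) with hD
  have hkey : D * (E - 1) = (1 + E)^3 := by
    have hη' : ηs * (E - 1) = 2 * (1 + E) := by linarith [hroot]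
    nlinarith [hη', sq_nonneg (E - 1)]
  have hDpos : 0 < D := by nlinarith [hkey, sq_nonneg (1 + E)]
  constructor
  · exact div_pos (by positivity) hDpos
  · rw [div_lt_one hDpos]
    nlinarith [hkey]
end

section
/- Define ζ(η) = (1+e^η)²/(2ηe^η − (1+e^η)(1−e^η)) for η > 0. Then ζ attains its minimum over (0, ∞) exactly at η = η_sup, where η_sup is the unique positive solution of 2(1+e^η) + η(1−e^η) = 0. -/
noncomputable def pfun (x : ℝ) : ℝ := 2*(1 + Real.exp x) + x*(1 - Real.exp x)

noncomputable def gfun (x : ℝ) : ℝ :=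
  (2*x*Real.exp x + (Real.exp x)^2 - 1) / (1 + Real.exp x)^2

lemma exp1pos (x : ℝ) : (0:ℝ) < 1 + Real.exp x := by positivity

lemma hasDerivAt_p (x : ℝ) :
    HasDerivAt pfun (1 + Real.exp x - x*Real.exp x) x := by
  have h1 : HasDerivAt (fun x : ℝ => 2*(1 + Real.exp x)) (2*Real.exp x) x := by
    simpa using ((Real.hasDerivAt_exp x).const_add 1).const_mul 2
  have h2 : HasDerivAt (fun x : ℝ => x*(1 - Real.exp x))
      (1*(1 - Real.exp x) + x*(-Real.exp x)) x := by
    exact (hasDerivAt_id x).mul (((Real.hasDerivAt_exp x).const_sub 1))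
  have := h1.add h2
  refine this.congr_deriv ?_
  ring

lemma hasDerivAt_p' (x : ℝ) :
    HasDerivAt (fun x => 1 + Real.exp x - x*Real.exp x) (-(x*Real.exp x)) x := by
  have h1 : HasDerivAt (fun x : ℝ => 1 + Real.exp x) (Real.exp x) x :=
    (Real.hasDerivAt_exp x).const_add 1
  have h2 : HasDerivAt (fun x : ℝ => x*Real.exp x)
      (1*Real.exp x + x*Real.exp x) x :=
    (hasDerivAt_id x).mul (Real.hasDerivAt_exp x)
  have := h1.sub h2
  refine this.congr_deriv ?_
  ring

lemma p_strictConcave : StrictConcaveOn ℝ (Set.Ici (0:ℝ)) pfun := by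
  have hd : ∀ x : ℝ, deriv pfun x = 1 + Real.exp x - x*Real.exp x := by
    intro x; exact (hasDerivAt_p x).deriv
  apply strictConcaveOn_of_deriv2_neg (convex_Ici 0)
  · exact Continuous.continuousOn (by unfold pfun; continuity)
  · intro x hx
    rw [interior_Ici] at hx
    have : deriv (deriv pfun) x = -(x*Real.exp x) := by
      rw [show deriv pfun = fun x => 1 + Real.exp x - x*Real.exp x from funext hd]
      exact (hasDerivAt_p' x).deriv
    simp only [Function.iterate_succ, Function.iterate_zero, Function.comp_apply, id_eq]
    rw [this]
    have hx' : (0:ℝ) < x := hx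
    have := Real.exp_pos x
    nlinarith

lemma hasDerivAt_g (x : ℝ) :
    HasDerivAt gfun (2*Real.exp x * pfun x / (1 + Real.exp x)^3) x := by
  have he := Real.hasDerivAt_exp x
  have hN : HasDerivAt (fun x : ℝ => 2*x*Real.exp x + (Real.exp x)^2 - 1)
      ((2*Real.exp x + 2*x*Real.exp x) + 2*Real.exp x*Real.exp x) x := by
    have h1 : HasDerivAt (fun x : ℝ => 2*x*Real.exp x)
        (2*Real.exp x + 2*x*Real.exp x) x := by
      have := ((hasDerivAt_id x).const_mul 2).mul he
      refine this.congr_deriv ?_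
      simp only [id_eq]
      ring
    have h2 : HasDerivAt (fun x : ℝ => (Real.exp x)^2) (2*Real.exp x*Real.exp x) x := by
      have := (he.pow 2)
      refine this.congr_deriv ?_; ring
    exact (h1.add h2).sub_const 1
  have hQ : HasDerivAt (fun x : ℝ => (1 + Real.exp x)^2)
      (2*(1 + Real.exp x)*Real.exp x) x := by
    have := (he.const_add 1).pow 2
    refine this.congr_deriv ?_; ring
  have hQne : ((1 + Real.exp x)^2) ≠ 0 := by positivity
  have := hN.div hQ hQne
  refine this.congr_deriv ?_
  unfold pfun
  have h := (exp1pos x).ne'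
  field_simp
  ring

lemma g_diff : Differentiable ℝ gfun := fun x => (hasDerivAt_g x).differentiableAt

theorem stmt_key (ηs : ℝ) (hη : 0 < ηs)
    (hroot : 2*(1 + Real.exp ηs) + ηs*(1 - Real.exp ηs) = 0) :
    ∀ η : ℝ, 0 < η → η ≠ ηs → gfun η < gfun ηs := by
  have hp0 : pfun 0 = 4 := by norm_num [pfun]
  have hps : pfun ηs = 0 := hroot
  have hsc := p_strictConcave
  -- p > 0 on (0, ηs)
  have hppos : ∀ x : ℝ, 0 < x → x < ηs → 0 < pfun x := by
    intro x hx hxs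
    have ha : (0:ℝ) < (ηs - x)/ηs := div_pos (by linarith) hη
    have hb : (0:ℝ) < x/ηs := by positivity
    have hab : (ηs - x)/ηs + x/ηs = 1 := by field_simp; ring
    have := hsc.2 (Set.self_mem_Ici) (Set.mem_Ici.mpr hη.le) hη.ne ha hb hab
    simp only [smul_eq_mul, mul_zero, zero_add, hp0, hps] at this
    have hx' : (x/ηs) * ηs = x := by field_simp
    rw [hx'] at this
    nlinarith
  -- p < 0 on (ηs, ∞)
  have hpneg : ∀ x : ℝ, ηs < x → pfun x < 0 := by
    intro x hxs
    have hx : 0 < x := hη.trans hxs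
    have ha : (0:ℝ) < (x - ηs)/x := div_pos (by linarith) hx
    have hb : (0:ℝ) < ηs/x := by positivity
    have hab : (x - ηs)/x + ηs/x = 1 := by field_simp; ring
    have := hsc.2 (Set.self_mem_Ici) (Set.mem_Ici.mpr hx.le) hx.ne ha hb hab
    simp only [smul_eq_mul, mul_zero, zero_add, hp0] at this
    have hx' : (ηs/x) * x = ηs := by field_simp
    rw [hx', hps] at this
    nlinarith
  -- g strictly mono on [0, ηs]
  have hmono : StrictMonoOn gfun (Set.Icc 0 ηs) := by
    apply strictMonoOn_of_deriv_pos (convex_Icc 0 ηs) g_diff.continuous.continuousOn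
    intro x hx
    rw [interior_Icc] at hx
    rw [(hasDerivAt_g x).deriv]
    have := hppos x hx.1 hx.2
    have := Real.exp_pos x
    have := exp1pos x
    positivity
  -- g strictly anti on [ηs, ∞)
  have hanti : StrictAntiOn gfun (Set.Ici ηs) := by
    apply strictAntiOn_of_deriv_neg (convex_Ici ηs) g_diff.continuous.continuousOn
    intro x hx
    rw [interior_Ici] at hx
    rw [(hasDerivAt_g x).deriv]
    have hp := hpneg x hx
    have h1 := Real.exp_pos x
    have h2 := exp1pos x
    have : 0 < (1 + Real.exp x)^3 := by positivity
    have : 2*Real.exp x * pfun x < 0 := by nlinarith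
    exact div_neg_of_neg_of_pos this (by positivity)
  intro η hηp hne
  rcases lt_or_gt_of_ne hne with h | h
  · exact hmono ⟨hηp.le, h.le⟩ ⟨hη.le, le_refl _⟩ h
  · exact hanti (Set.mem_Ici.mpr (le_refl _)) (Set.mem_Ici.mpr h.le) h

lemma gN_pos (x : ℝ) (hx : 0 < x) :
    0 < 2*x*Real.exp x + (Real.exp x)^2 - 1 := by
  nlinarith [Real.exp_pos x, Real.add_one_lt_exp hx.ne']

lemma g_pos (x : ℝ) (hx : 0 < x) : 0 < gfun x := by
  have := gN_pos x hx
  unfold gfun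
  positivity

lemma zeta_eq (x : ℝ) :
    (1 + Real.exp x)^2 / (2*x*Real.exp x - (1 + Real.exp x)*(1 - Real.exp x))
      = (gfun x)⁻¹ := by
  unfold gfun
  rw [inv_div]
  ring_nf

/-- `ζ(η) = (1+e^η)²/(2ηe^η − (1+e^η)(1−e^η))` attains its minimum over
`(0,∞)` exactly at `η = η_sup`. -/
theorem stmt_11 (ηs : ℝ) (hη : 0 < ηs)
    (hroot : 2*(1 + Real.exp ηs) + ηs*(1 - Real.exp ηs) = 0) :
    (∀ η : ℝ, 0 < η →
      (1 + Real.exp ηs)^2 /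
          (2*ηs*Real.exp ηs - (1 + Real.exp ηs)*(1 - Real.exp ηs)) ≤
      (1 + Real.exp η)^2 /
          (2*η*Real.exp η - (1 + Real.exp η)*(1 - Real.exp η))) ∧
    (∀ η : ℝ, 0 < η →
      (1 + Real.exp η)^2 /
          (2*η*Real.exp η - (1 + Real.exp η)*(1 - Real.exp η)) =
      (1 + Real.exp ηs)^2 /
          (2*ηs*Real.exp ηs - (1 + Real.exp ηs)*(1 - Real.exp ηs)) →
      η = ηs) := by
  have key := stmt_key ηs hη hroot
  constructor
  · intro η hηp
    rw [zeta_eq, zeta_eq]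
    rcases eq_or_ne η ηs with rfl | hne
    · exact le_refl _
    · have h := key η hηp hne
      exact inv_anti₀ (g_pos η hηp) h.le
  · intro η hηp heq
    by_contra hne
    have h := key η hηp hne
    rw [zeta_eq, zeta_eq] at heq
    have := inv_injective heq
    exact absurd this (ne_of_lt h)
end

section
/- For fixed ζ > 0, the equation m_ζ(η) = (1+e^η)(ζ(1−e^η) + 1+e^η) − 2ζηe^η = 0 has a solution η > 0 if and only if ζ ≥ ζ_min, where ζ_min = (1+e^{η_sup})²/(2η_sup e^{η_sup} − (1+e^{η_sup})(1−e^{η_sup})) and η_sup is the unique positive root of 2(1+e^η)+η(1−e^η) = 0. -/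
open Real

noncomputable def Dd (η : ℝ) : ℝ := 2*η*Real.exp η - (1+Real.exp η)*(1-Real.exp η)
noncomputable def Nn (η : ℝ) : ℝ := (1+Real.exp η)^2
noncomputable def phif (η : ℝ) : ℝ := Dd η / Nn η

lemma Nn_pos (η : ℝ) : 0 < Nn η := by
  have := Real.exp_pos η; unfold Nn; positivity

lemma Dd_pos {η : ℝ} (h : 0 < η) : 0 < Dd η := by
  have h1 : 1 < Real.exp η := Real.one_lt_exp_iff.mpr h
  have := Real.exp_pos η
  unfold Dd; nlinarith

lemma hasDerivAt_phif (η : ℝ) :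
    HasDerivAt phif
      (2*Real.exp η*(2*(1+Real.exp η)+η*(1-Real.exp η)) / (1+Real.exp η)^3) η := by
  have hE := Real.hasDerivAt_exp η
  have h1 : HasDerivAt (fun x : ℝ => 2*x*Real.exp x)
      (2*(1*Real.exp η + η*Real.exp η)) η := by
    have := ((hasDerivAt_id η).mul hE).const_mul 2
    simpa [mul_assoc] using this
  have h2 : HasDerivAt (fun x : ℝ => (1+Real.exp x)*(1-Real.exp x))
      (Real.exp η*(1-Real.exp η) + (1+Real.exp η)*(-Real.exp η)) η := by
    have hA : HasDerivAt (fun x : ℝ => 1 + Real.exp x) (Real.exp η) η := hE.const_add 1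
    have hB : HasDerivAt (fun x : ℝ => 1 - Real.exp x) (-Real.exp η) η := hE.const_sub 1
    exact (hA.mul hB).congr_deriv (by ring)
  have hD : HasDerivAt Dd
      (2*(1*Real.exp η + η*Real.exp η) - (Real.exp η*(1-Real.exp η) + (1+Real.exp η)*(-Real.exp η))) η := h1.sub h2
  have hN : HasDerivAt Nn (2*Real.exp η*(1+Real.exp η)) η := by
    have hA : HasDerivAt (fun x : ℝ => 1 + Real.exp x) (Real.exp η) η := hE.const_add 1
    have := hA.pow 2
    exact this.congr_deriv (by norm_num <;> ring)
  have hNe : Nn η ≠ 0 := (Nn_pos η).ne'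
  have hφ := hD.div hN hNe
  refine hφ.congr_deriv ?_
  have h1e : (1:ℝ) + Real.exp η ≠ 0 := by positivity
  unfold Nn Dd
  field_simp
  ring

lemma phif_differentiable : Differentiable ℝ phif :=
  fun x => (hasDerivAt_phif x).differentiableAt

/-- sign of h̃ = 2(1+e^η)+η(1−e^η) below the root -/
lemma htilde_pos {ηs : ℝ} (hη : 0 < ηs)
    (hroot : 2*(1 + Real.exp ηs) + ηs*(1 - Real.exp ηs) = 0)
    {η : ℝ} (h0 : 0 < η) (hlt : η < ηs) :
    0 < 2*(1+Real.exp η)+η*(1-Real.exp η) := by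
  have h1 : 1 < Real.exp η := Real.one_lt_exp_iff.mpr h0
  have h2 : 1 < Real.exp ηs := Real.one_lt_exp_iff.mpr hη
  have hmono : Real.exp η < Real.exp ηs := Real.exp_lt_exp.mpr hlt
  -- coth monotone: (e^ηs+1)(e^η−1) < (e^η+1)(e^ηs−1)
  have hcoth : (Real.exp ηs + 1)*(Real.exp η - 1) < (Real.exp η + 1)*(Real.exp ηs - 1) := by
    nlinarith
  -- hroot: 2(1+e^ηs) = ηs(e^ηs−1)
  nlinarith [mul_pos (sub_pos.mpr h2) (sub_pos.mpr h1),
    mul_lt_mul_of_pos_right hlt (mul_pos (sub_pos.mpr h2) (sub_pos.mpr h1)),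
    mul_lt_mul_of_pos_left hcoth (by norm_num : (0:ℝ) < 2)]

lemma htilde_neg {ηs : ℝ} (hη : 0 < ηs)
    (hroot : 2*(1 + Real.exp ηs) + ηs*(1 - Real.exp ηs) = 0)
    {η : ℝ} (hlt : ηs < η) :
    2*(1+Real.exp η)+η*(1-Real.exp η) < 0 := by
  have h0 : 0 < η := hη.trans hlt
  have h1 : 1 < Real.exp η := Real.one_lt_exp_iff.mpr h0
  have h2 : 1 < Real.exp ηs := Real.one_lt_exp_iff.mpr hη
  have hmono : Real.exp ηs < Real.exp η := Real.exp_lt_exp.mpr hlt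
  have hcoth : (Real.exp η + 1)*(Real.exp ηs - 1) < (Real.exp ηs + 1)*(Real.exp η - 1) := by
    nlinarith
  nlinarith [mul_pos (sub_pos.mpr h2) (sub_pos.mpr h1),
    mul_lt_mul_of_pos_right hlt (mul_pos (sub_pos.mpr h2) (sub_pos.mpr h1)),
    mul_lt_mul_of_pos_left hcoth (by norm_num : (0:ℝ) < 2)]

lemma phif_max {ηs : ℝ} (hη : 0 < ηs)
    (hroot : 2*(1 + Real.exp ηs) + ηs*(1 - Real.exp ηs) = 0)
    {η : ℝ} (h0 : 0 < η) : phif η ≤ phif ηs := by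
  rcases le_or_gt η ηs with hle | hlt
  · have hmono : StrictMonoOn phif (Set.Icc 0 ηs) := by
      apply strictMonoOn_of_deriv_pos (convex_Icc 0 ηs)
        (phif_differentiable.continuous.continuousOn)
      intro x hx
      rw [interior_Icc] at hx
      rw [(hasDerivAt_phif x).deriv]
      have h1e : (0:ℝ) < 1 + Real.exp x := by positivity
      have hpos := htilde_pos hη hroot hx.1 hx.2
      have he := Real.exp_pos x
      positivity
    rcases eq_or_lt_of_le hle with rfl | hlt'
    · exact le_refl _
    · exact (hmono ⟨h0.le, hle⟩ ⟨hη.le, le_refl _⟩ hlt').le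
  · have hanti : StrictAntiOn phif (Set.Ici ηs) := by
      apply strictAntiOn_of_deriv_neg (convex_Ici ηs)
        (phif_differentiable.continuous.continuousOn)
      intro x hx
      rw [interior_Ici] at hx
      rw [(hasDerivAt_phif x).deriv]
      have h1e : (0:ℝ) < 1 + Real.exp x := by positivity
      have hneg := htilde_neg hη hroot hx
      have he := Real.exp_pos x
      apply div_neg_of_neg_of_pos
      · nlinarith
      · positivity
    exact (hanti (Set.self_mem_Ici) (Set.mem_Ici.mpr hlt.le) hlt).le

/-- For fixed `ζ > 0`, `m_ζ(η) = (1+e^η)(ζ(1−e^η) + 1+e^η) − 2ζηe^η = 0`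
has a positive solution iff `ζ ≥ ζ_min`. -/
theorem stmt_12 (ζ : ℝ) (hζ : 0 < ζ) (ηs : ℝ) (hη : 0 < ηs)
    (hroot : 2*(1 + Real.exp ηs) + ηs*(1 - Real.exp ηs) = 0) :
    (∃ η : ℝ, 0 < η ∧
        (1 + Real.exp η)*(ζ*(1 - Real.exp η) + 1 + Real.exp η)
          - 2*ζ*η*Real.exp η = 0)
      ↔ (1 + Real.exp ηs)^2 /
          (2*ηs*Real.exp ηs - (1 + Real.exp ηs)*(1 - Real.exp ηs)) ≤ ζ := by
  have hDs : 0 < Dd ηs := Dd_pos hη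
  have hNs : 0 < Nn ηs := Nn_pos ηs
  have hgoal_eq : (1 + Real.exp ηs)^2 /
      (2*ηs*Real.exp ηs - (1 + Real.exp ηs)*(1 - Real.exp ηs)) = Nn ηs / Dd ηs := rfl
  rw [hgoal_eq]
  constructor
  · rintro ⟨η, h0, hm⟩
    have hD : 0 < Dd η := Dd_pos h0
    have hN : 0 < Nn η := Nn_pos η
    have hm' : ζ * Dd η = Nn η := by unfold Dd Nn; nlinarith [hm]
    have hφ := phif_max hη hroot h0
    unfold phif at hφ
    rw [div_le_iff₀ hDs]
    rw [div_le_div_iff₀ hN hNs] at hφ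
    nlinarith
  · intro hle
    have hy0 : 0 < 1/ζ := by positivity
    have hys : 1/ζ ≤ phif ηs := by
      unfold phif
      rw [div_le_div_iff₀ hζ hNs]
      rw [div_le_iff₀ hDs] at hle
      linarith
    have hphi0 : phif 0 = 0 := by
      unfold phif Dd
      simp [Real.exp_zero]
    have hIVT := intermediate_value_Icc hη.le
      (phif_differentiable.continuous.continuousOn (s := Set.Icc 0 ηs))
    have hmem : 1/ζ ∈ Set.Icc (phif 0) (phif ηs) := by
      rw [hphi0]; exact ⟨hy0.le, hys⟩
    obtain ⟨η, hηmem, hφ⟩ := hIVT hmem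
    have hηpos : 0 < η := by
      rcases eq_or_lt_of_le hηmem.1 with rfl | h
      · rw [hphi0] at hφ; exact absurd hφ.symm hy0.ne'
      · exact h
    refine ⟨η, hηpos, ?_⟩
    have hN : (0:ℝ) < Nn η := Nn_pos η
    unfold phif at hφ
    have hm' : ζ * Dd η = Nn η := by
      field_simp at hφ
      nlinarith [hφ]
    unfold Dd Nn at hm'
    nlinarith [hm']
end
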